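/- Let F(T) be a Lubin–Tate series for p, and let w be the unique Witt vector over ℤ_p[[T]] whose ghost components are (F^{∘n}(T))_{n∈ℕ}. Then all ghost components of the Witt vector w − V(w) − τ(T) lie in the ideal T²·ℤ_p[[T]], and consequently w − V(w) − τ(T) ∈ W(T²ℤ_p[[T]]). -/

import Mathlib

open PowerSeries

/-- Formal composition `f ∘ g` of power series (valid when `g` has zero constant term):
the `k`-th coefficient is that of `∑_{j ≤ k} f_j g^j`. -/
noncomputable def psComp {R : Type*} [CommRing R] (f g : PowerSeries R) : PowerSeries R :=
  PowerSeries.mk fun k =>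
    PowerSeries.coeff k (∑ j ∈ Finset.range (k + 1), PowerSeries.C (PowerSeries.coeff j f) * g ^ j)

/-- Let `F(T) = pT + T^p + pT²G(T)` be a Lubin–Tate series for `p`, and let `w` be the
Witt vector over `ℤ_p[[T]]` whose ghost components are the compositional iterates
`F^{∘n}(T)`.  Then all the ghost components of `w − V(w) − τ(T)` lie in the ideal
`(T²)`, and consequently all the components of `w − V(w) − τ(T)` lie in `(T²)`. -/
theorem lubinTate_wittVector_sub_verschiebung_sub_teichmuller (p : ℕ) [Fact p.Prime]
    (G : PowerSeries ℤ_[p]) (F : PowerSeries ℤ_[p])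
    (hF : F = PowerSeries.C (p : ℤ_[p]) * PowerSeries.X + PowerSeries.X ^ p +
      PowerSeries.C (p : ℤ_[p]) * PowerSeries.X ^ 2 * G)
    (w : WittVector p (PowerSeries ℤ_[p]))
    (hw : ∀ n : ℕ, WittVector.ghostComponent n w = (fun g => psComp g F)^[n] PowerSeries.X) :
    (∀ n : ℕ, WittVector.ghostComponent n
        (w - WittVector.verschiebung w - WittVector.teichmuller p PowerSeries.X) ∈
        Ideal.span ({PowerSeries.X ^ 2} : Set (PowerSeries ℤ_[p]))) ∧
    (∀ n : ℕ,
      (w - WittVector.verschiebung w - WittVector.teichmuller p PowerSeries.X).coeff n ∈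
        Ideal.span ({PowerSeries.X ^ 2} : Set (PowerSeries ℤ_[p]))) := by
  have hp : p.Prime := Fact.out
  have hp2 : 2 ≤ p := hp.two_le
  set I := Ideal.span ({PowerSeries.X ^ 2} : Set (PowerSeries ℤ_[p])) with hI
  -- membership criterion
  have hmemI : ∀ f : PowerSeries ℤ_[p],
      f ∈ I ↔ (PowerSeries.coeff 0 f = 0 ∧ PowerSeries.coeff 1 f = 0) := by
    intro f
    rw [hI, Ideal.mem_span_singleton, PowerSeries.X_pow_dvd_iff]
    constructor
    · intro h; exact ⟨h 0 (by norm_num), h 1 (by norm_num)⟩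
    · rintro ⟨h0, h1⟩ m hm
      interval_cases m
      · exact h0
      · exact h1
  -- coefficients of F
  have hF0 : PowerSeries.coeff 0 F = 0 := by
    simp [hF, PowerSeries.coeff_X_pow, (by omega : ¬ (0 = p)), hp.ne_zero]
  have hF1 : PowerSeries.coeff 1 F = (p : ℤ_[p]) := by
    have : ¬ (1 = p) := by omega
    simp [hF, PowerSeries.coeff_X_pow, this, PowerSeries.coeff_one_mul,
      PowerSeries.coeff_C_mul]
  set Φ : ℕ → PowerSeries ℤ_[p] := fun n => (fun g => psComp g F)^[n] PowerSeries.X with hΦ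
  have hΦ0 : Φ 0 = PowerSeries.X := rfl
  have hΦs : ∀ n, Φ (n + 1) = psComp (Φ n) F := by
    intro n
    simp only [hΦ, Function.iterate_succ_apply']
  -- coeff 0 of psComp
  have hcomp0 : ∀ h : PowerSeries ℤ_[p],
      PowerSeries.coeff 0 (psComp h F) = PowerSeries.coeff 0 h := by
    intro h
    simp [psComp, PowerSeries.coeff_mk]
  have hc0 : ∀ n, PowerSeries.coeff 0 (Φ n) = 0 := by
    intro n
    induction n with
    | zero => simp [hΦ0]
    | succ n ih => rw [hΦs, hcomp0, ih]
  -- coeff 1 of psComp when constant term vanishes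
  have hcomp1 : ∀ h : PowerSeries ℤ_[p], PowerSeries.coeff 0 h = 0 →
      PowerSeries.coeff 1 (psComp h F)
        = (p : ℤ_[p]) * PowerSeries.coeff 1 h := by
    intro h h0
    simp [psComp, PowerSeries.coeff_mk, Finset.sum_range_succ, h0, hF1, mul_comm]
  -- the Witt vector
  set y := w - WittVector.verschiebung w - WittVector.teichmuller p PowerSeries.X with hy
  have part1 : ∀ n : ℕ, WittVector.ghostComponent n y ∈ I := by
    intro n
    have hg : WittVector.ghostComponent (p := p) n y
        = WittVector.ghostComponent n w
          - WittVector.ghostComponent n (WittVector.verschiebung w)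
          - (PowerSeries.X : PowerSeries ℤ_[p]) ^ p ^ n := by
      rw [hy, map_sub, map_sub, WittVector.ghostComponent_teichmuller]
    cases n with
    | zero =>
      rw [hg, WittVector.ghostComponent_zero_verschiebung, hw 0]
      simp
    | succ n =>
      rw [hg, WittVector.ghostComponent_verschiebung, hw, hw]
      rw [hmemI]
      have hpow : 2 ≤ p ^ (n + 1) := le_trans hp2 (Nat.le_self_pow (by omega) p)
      constructor
      · rw [map_sub, map_sub]
        have : PowerSeries.coeff 0
            ((p : PowerSeries ℤ_[p]) * (fun g => psComp g F)^[n] PowerSeries.X)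
            = (p : ℤ_[p]) * PowerSeries.coeff 0 (Φ n) := by
          rw [← map_natCast (PowerSeries.C (R := ℤ_[p])) p, PowerSeries.coeff_C_mul]
        have h5 : (fun g => psComp g F)^[n+1] (PowerSeries.X : PowerSeries ℤ_[p]) = Φ (n+1) := rfl
        have hne : ¬ (0 = p ^ (n + 1)) := by omega
        rw [h5, hc0 (n + 1), this, hc0 n]
        simp [PowerSeries.coeff_X_pow, hne]
      · rw [map_sub, map_sub]
        have h2 : PowerSeries.coeff 1 (psComp (Φ n) F)
            = (p : ℤ_[p]) * PowerSeries.coeff 1 (Φ n) := hcomp1 _ (hc0 n)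
        have h3 : PowerSeries.coeff 1
            ((p : PowerSeries ℤ_[p]) * (fun g => psComp g F)^[n] PowerSeries.X)
            = (p : ℤ_[p]) * PowerSeries.coeff 1 (Φ n) := by
          rw [← map_natCast (PowerSeries.C (R := ℤ_[p])) p, PowerSeries.coeff_C_mul]
        have h4 : PowerSeries.coeff 1 (Φ (n + 1))
            = (p : ℤ_[p]) * PowerSeries.coeff 1 (Φ n) := by rw [hΦs, h2]
        have h5 : (fun g => psComp g F)^[n+1] (PowerSeries.X : PowerSeries ℤ_[p]) = Φ (n+1) := rfl
        have hne : ¬ (1 = p ^ (n + 1)) := by omega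
        rw [h5, h4, h3]
        simp [PowerSeries.coeff_X_pow, hne]
  refine ⟨part1, ?_⟩
  -- part 2 by strong induction
  have hpne : ((p : ℤ_[p]) : ℤ_[p]) ≠ 0 := Nat.cast_ne_zero.mpr hp.ne_zero
  intro n
  induction n using Nat.strong_induction_on with
  | _ n ih =>
    have h1 := part1 n
    rw [WittVector.ghostComponent_apply, aeval_wittPolynomial] at h1
    rw [Finset.sum_range_succ] at h1
    have hsum : (∑ i ∈ Finset.range n,
        (p : PowerSeries ℤ_[p]) ^ i * y.coeff i ^ p ^ (n - i)) ∈ I := by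
      refine Ideal.sum_mem _ fun i hi => Ideal.mul_mem_left _ _ ?_
      have hi' : i < n := Finset.mem_range.mp hi
      exact Ideal.pow_mem_of_mem I (ih i hi') _ (pow_pos (by omega) _)
    have h2 : (p : PowerSeries ℤ_[p]) ^ n * y.coeff n ^ p ^ (n - n) ∈ I := by
      have := I.sub_mem h1 hsum
      simpa using this
    rw [Nat.sub_self, pow_zero, pow_one] at h2
    rw [hmemI] at h2 ⊢
    have key : ∀ m : ℕ, PowerSeries.coeff m ((p : PowerSeries ℤ_[p]) ^ n * y.coeff n)
        = (p : ℤ_[p]) ^ n * PowerSeries.coeff m (y.coeff n) := by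
      intro m
      rw [← map_natCast (PowerSeries.C (R := ℤ_[p])) p, ← map_pow, PowerSeries.coeff_C_mul]
    constructor
    · have := h2.1
      rw [key] at this
      exact (mul_eq_zero.mp this).resolve_left (pow_ne_zero _ hpne)
    · have := h2.2
      rw [key] at this
      exact (mul_eq_zero.mp this).resolve_left (pow_ne_zero _ hpne)
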